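/- Under Assumption 1 (B ∈ 𝒲, 𝓕 = 𝒫DΛ(A;·)𝒫 injective on 𝒲 with 𝒴 = 𝓕(𝒲) closed and complemented), the second- and third-order reversion of the Taylor series of the projected relative forward map yields B = F₁ + F₂ + F₃ + O(‖B‖⁴), where F₁ = 𝓕⁻¹Q(𝒫Λ(A+B)𝒫 − 𝒫Λ(A)𝒫), F₂ = −M P(F₁)² N, and F₃ = −M P(F₁)³ N + M P(F₁) P(F₂') N + M P(F₂') P(F₁) N with F₂' = M P(F₁)² N, and each F_j satisfies ‖F_j‖ = O(‖B‖^j). -/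

import Mathlib

/- Statement 16: under Assumption 1, the second- and third-order reversion of
the Taylor series of the projected relative forward map gives
`B = F₁ + F₂ + F₃ + O(‖B‖⁴)` with `F₁ = 𝓕⁻¹Q(𝒫Λ(A+B)𝒫 − 𝒫Λ(A)𝒫)`,
`F₂ = −M P(F₁)² N`, `F₃ = −M P(F₁)³ N + M P(F₁)P(G₂)N + M P(G₂)P(F₁)N`
(`G₂ = M P(F₁)² N = −F₂`), and `‖F_j‖ = O(‖B‖^j)`.
`W` stands for the subspace `𝒲`, `H = H¹_⋄(Ω)`, `K = L²_⋄(Γ)`; `N = N(A)`,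
`P B = P_A(B)` (linear and bounded in `B`), and `Mop` for the composite map
`y ↦ 𝓕⁻¹Q(𝒫Ty𝒫)`.  Assumption 1 (injectivity of `𝓕` on `𝒲` and the projection
property of `Q` onto `𝒴 = 𝓕(𝒲)`) is encoded by `Mop (P B ∘ N) = B`, since
`𝓕(B) = 𝒫 T P_A(B) N(A) 𝒫`; the Taylor series
`𝒫(Λ(A+B) − Λ(A))𝒫 = 𝒫 T (Σ_{k≥1} P(B)^k N) 𝒫` (valid for `‖B‖ < c_A`) gives
`F₁(B) = Mop (Σ_{k≥1} P(B)^k ∘ N)`. -/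

noncomputable section

set_option maxHeartbeats 16000000 in
theorem stmt16
    {W : Type*} [NormedAddCommGroup W] [NormedSpace ℂ W] [CompleteSpace W]
    {H K : Type*} [NormedAddCommGroup H] [InnerProductSpace ℂ H] [CompleteSpace H]
    [NormedAddCommGroup K] [InnerProductSpace ℂ K] [CompleteSpace K]
    (N : K →L[ℂ] H)                          -- `N = N(A)`
    (P : W →L[ℂ] (H →L[ℂ] H))                -- `B ↦ P_A(B)`
    (Mop : (K →L[ℂ] H) →L[ℂ] W)              -- `y ↦ 𝓕⁻¹ Q (𝒫 T y 𝒫)`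
    -- Assumption 1: `𝓕⁻¹ ∘ 𝓕 = id` on `𝒲`
    (hM : ∀ B : W, Mop ((P B).comp N) = B)
    -- the reversion terms
    (F₁ F₂ F₃ : W → W)
    (hF₁ : ∀ B : W, F₁ B = Mop (∑' k : ℕ, (P B ^ (k + 1)).comp N))
    (hF₂ : ∀ B : W, F₂ B = -Mop ((P (F₁ B) ^ 2).comp N))
    (hF₃ : ∀ B : W, F₃ B =
      -Mop ((P (F₁ B) ^ 3).comp N)
      + Mop (((P (F₁ B)).comp (P (Mop ((P (F₁ B) ^ 2).comp N)))).comp N)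
      + Mop (((P (Mop ((P (F₁ B) ^ 2).comp N))).comp (P (F₁ B))).comp N)) :
    ∃ δ C : ℝ, 0 < δ ∧ 0 < C ∧ ∀ B : W, ‖B‖ ≤ δ →
      ‖F₁ B‖ ≤ C * ‖B‖ ∧
      ‖F₂ B‖ ≤ C * ‖B‖ ^ 2 ∧
      ‖F₃ B‖ ≤ C * ‖B‖ ^ 3 ∧
      ‖B - (F₁ B + F₂ B + F₃ B)‖ ≤ C * ‖B‖ ^ 4 := by
  classical
  refine ⟨min 1 (1/(2*(‖P‖+1))), 1300*((1+‖Mop‖)*(1+‖N‖)*(1+‖P‖))^26,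
    lt_min one_pos (by positivity), by positivity, ?_⟩
  intro B hB
  set a := (1+‖Mop‖)*(1+‖N‖)*(1+‖P‖) with ha
  have hm0 : (0:ℝ) ≤ ‖Mop‖ := ContinuousLinearMap.opNorm_nonneg _
  have hn0 : (0:ℝ) ≤ ‖N‖ := ContinuousLinearMap.opNorm_nonneg _
  have hp0 : (0:ℝ) ≤ ‖P‖ := ContinuousLinearMap.opNorm_nonneg _
  have ha1 : 1 ≤ a := by rw [ha]; nlinarith [mul_nonneg hm0 hn0, mul_nonneg hn0 hp0, mul_nonneg hm0 hp0, mul_nonneg (mul_nonneg hm0 hn0) hp0]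
  have ha0 : (0:ℝ) ≤ a := le_trans zero_le_one ha1
  have hma : ‖Mop‖ ≤ a := by rw [ha]; nlinarith [mul_nonneg hm0 hn0, mul_nonneg hn0 hp0, mul_nonneg hm0 hp0, mul_nonneg (mul_nonneg hm0 hn0) hp0]
  have hna : ‖N‖ ≤ a := by rw [ha]; nlinarith [mul_nonneg hm0 hn0, mul_nonneg hn0 hp0, mul_nonneg hm0 hp0, mul_nonneg (mul_nonneg hm0 hn0) hp0]
  have hpa : ‖P‖ ≤ a := by rw [ha]; nlinarith [mul_nonneg hm0 hn0, mul_nonneg hn0 hp0, mul_nonneg hm0 hp0, mul_nonneg (mul_nonneg hm0 hn0) hp0]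
  clear_value a
  have hq0 : (0:ℝ) ≤ ‖B‖ := norm_nonneg _
  have hq1 : ‖B‖ ≤ 1 := le_trans hB (min_le_left _ _)
  have hr : ‖P B‖ ≤ 1/2 := by
    have h2 : ‖B‖ ≤ 1/(2*(‖P‖+1)) := le_trans hB (min_le_right _ _)
    calc ‖P B‖ ≤ ‖P‖ * ‖B‖ := P.le_opNorm B
      _ ≤ ‖P‖ * (1/(2*(‖P‖+1))) := by gcongr
      _ ≤ 1/2 := by
          rw [mul_one_div, div_le_iff₀ (by positivity)]
          nlinarith
  have hbq : ‖P B‖ ≤ a*‖B‖ := by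
    calc ‖P B‖ ≤ ‖P‖ * ‖B‖ := P.le_opNorm B
      _ ≤ a * ‖B‖ := by gcongr
  have haq0 : (0:ℝ) ≤ a*‖B‖ := mul_nonneg ha0 hq0
  -- summability
  have hnorm_le : ∀ k : ℕ, ‖((P B)^(k+1)).comp N‖ ≤ ‖N‖ * (1/2:ℝ)^(k+1) := by
    intro k
    calc ‖((P B)^(k+1)).comp N‖ ≤ ‖(P B)^(k+1)‖ * ‖N‖ :=
          ContinuousLinearMap.opNorm_comp_le _ _
      _ ≤ ‖P B‖^(k+1) * ‖N‖ := by
          gcongr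
          exact norm_pow_le' _ (Nat.succ_pos k)
      _ ≤ (1/2:ℝ)^(k+1) * ‖N‖ :=
          mul_le_mul_of_nonneg_right
            (pow_le_pow_left₀ (ContinuousLinearMap.opNorm_nonneg _) hr (k+1)) hn0
      _ = ‖N‖ * (1/2:ℝ)^(k+1) := mul_comm _ _
  have hgeo : Summable (fun k : ℕ => ‖N‖ * (1/2:ℝ)^(k+1)) := by
    have h := (summable_geometric_two).mul_left ‖N‖
    exact (summable_nat_add_iff 1).mpr h
  have hs : Summable (fun k : ℕ => ((P B)^(k+1)).comp N) :=
    Summable.of_norm_bounded (f := fun k : ℕ => ((P B)^(k+1)).comp N) hgeo hnorm_le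
  have hs1 : Summable (fun k : ℕ => ((P B)^(k+2)).comp N) :=
    (summable_nat_add_iff 1).mpr hs
  have hs2 : Summable (fun k : ℕ => ((P B)^(k+3)).comp N) :=
    (summable_nat_add_iff 1).mpr hs1
  -- splitting the series
  have e0 : (∑' k : ℕ, ((P B)^(k+1)).comp N)
      = ((P B)^1).comp N + ∑' k : ℕ, ((P B)^(k+2)).comp N := Summable.tsum_eq_zero_add hs
  have e1 : (∑' k : ℕ, ((P B)^(k+2)).comp N)
      = ((P B)^2).comp N + ∑' k : ℕ, ((P B)^(k+3)).comp N := Summable.tsum_eq_zero_add hs1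
  have e2 : (∑' k : ℕ, ((P B)^(k+3)).comp N)
      = ((P B)^3).comp N + ∑' k : ℕ, ((P B)^(k+4)).comp N := Summable.tsum_eq_zero_add hs2
  have hF1eq : F₁ B = B + (Mop (((P B)^2).comp N) + (Mop (((P B)^3).comp N)
      + Mop (∑' k : ℕ, ((P B)^(k+4)).comp N))) := by
    rw [hF₁ B, e0, e1, e2, map_add, map_add, map_add, pow_one, hM B]
  -- tail estimate
  have hterm : ∀ k : ℕ, ‖((P B)^(k+4)).comp N‖ ≤ (‖N‖*‖P B‖^4)*(1/2:ℝ)^k := by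
    intro k
    have h3 : ‖P B‖^k ≤ (1/2:ℝ)^k := pow_le_pow_left₀ (ContinuousLinearMap.opNorm_nonneg _) hr k
    calc ‖((P B)^(k+4)).comp N‖ ≤ ‖(P B)^(k+4)‖ * ‖N‖ :=
          ContinuousLinearMap.opNorm_comp_le _ _
      _ ≤ ‖P B‖^(k+4) * ‖N‖ := by
          gcongr
          exact norm_pow_le' _ (by omega)
      _ = (‖N‖*‖P B‖^4)*‖P B‖^k := by rw [pow_add]; ring
      _ ≤ (‖N‖*‖P B‖^4)*(1/2:ℝ)^k := by gcongr
  have hsn : Summable (fun k : ℕ => ‖((P B)^(k+4)).comp N‖) :=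
    Summable.of_nonneg_of_le (fun _ => norm_nonneg _) hterm
      ((summable_geometric_two).mul_left _)
  have ht3 : ‖∑' k : ℕ, ((P B)^(k+4)).comp N‖ ≤ 2*(‖N‖*‖P B‖^4) := by
    calc ‖∑' k : ℕ, ((P B)^(k+4)).comp N‖ ≤ ∑' k : ℕ, ‖((P B)^(k+4)).comp N‖ :=
          norm_tsum_le_tsum_norm hsn
      _ ≤ ∑' k : ℕ, (‖N‖*‖P B‖^4)*(1/2:ℝ)^k :=
          Summable.tsum_le_tsum hterm hsn ((summable_geometric_two).mul_left _)
      _ = (‖N‖*‖P B‖^4)*2 := by rw [tsum_mul_left, tsum_geometric_two]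
      _ = 2*(‖N‖*‖P B‖^4) := by ring
  -- abbreviations
  have h2 := hF₂ B
  have h3 := hF₃ B
  set t3 := ∑' k : ℕ, ((P B)^(k+4)).comp N with ht3def
  set g2 := Mop (((P B)^2).comp N) with hg2def
  set g3 := Mop (((P B)^3).comp N) with hg3def
  set ee := Mop t3 with heedef
  set u := P (F₁ B) with hudef
  set g2' := Mop ((u^2).comp N) with hg2'def
  set g := P g2' with hgdef
  clear_value t3 g2 g3 ee u g2' g
  -- basic norm bounds
  have hg2n : ‖g2‖ ≤ a^4*‖B‖^2 := by
    rw [hg2def]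
    calc ‖Mop (((P B)^2).comp N)‖ ≤ ‖Mop‖ * ‖((P B)^2).comp N‖ := Mop.le_opNorm _
      _ ≤ ‖Mop‖ * (‖(P B)^2‖ * ‖N‖) := by
          gcongr
          exact ContinuousLinearMap.opNorm_comp_le _ _
      _ ≤ ‖Mop‖ * (‖P B‖^2 * ‖N‖) := by
          gcongr
          exact norm_pow_le' _ (by omega)
      _ ≤ a * ((a*‖B‖)^2 * a) := by gcongr
      _ = a^4*‖B‖^2 := by ring
  have hg3n : ‖g3‖ ≤ a^5*‖B‖^3 := by
    rw [hg3def]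
    calc ‖Mop (((P B)^3).comp N)‖ ≤ ‖Mop‖ * ‖((P B)^3).comp N‖ := Mop.le_opNorm _
      _ ≤ ‖Mop‖ * (‖(P B)^3‖ * ‖N‖) := by
          gcongr
          exact ContinuousLinearMap.opNorm_comp_le _ _
      _ ≤ ‖Mop‖ * (‖P B‖^3 * ‖N‖) := by
          gcongr
          exact norm_pow_le' _ (by omega)
      _ ≤ a * ((a*‖B‖)^3 * a) := by gcongr
      _ = a^5*‖B‖^3 := by ring
  have heen : ‖ee‖ ≤ 2*(a^6*‖B‖^4) := by
    rw [heedef]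
    calc ‖Mop t3‖ ≤ ‖Mop‖ * ‖t3‖ := Mop.le_opNorm _
      _ ≤ ‖Mop‖ * (2*(‖N‖*‖P B‖^4)) := by gcongr
      _ ≤ a * (2*(a*(a*‖B‖)^4)) := by gcongr
      _ = 2*(a^6*‖B‖^4) := by ring
  have mono : ∀ (i k j l : ℕ), i ≤ k → l ≤ j → a^i*‖B‖^j ≤ a^k*‖B‖^l := by
    intro i k j l hik hlj
    exact mul_le_mul (pow_le_pow_right₀ ha1 hik) (pow_le_pow_of_le_one hq0 hq1 hlj)
      (pow_nonneg hq0 j) (pow_nonneg ha0 k)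
  have hF1n : ‖F₁ B‖ ≤ 5*(a^6*‖B‖) := by
    calc ‖F₁ B‖ = ‖B + (g2 + (g3 + ee))‖ := by rw [hF1eq]
      _ ≤ ‖B‖ + (‖g2‖ + (‖g3‖ + ‖ee‖)) := by
          refine le_trans (norm_add_le _ _) ?_
          gcongr
          refine le_trans (norm_add_le _ _) ?_
          gcongr
          exact norm_add_le _ _
      _ ≤ ‖B‖ + (a^4*‖B‖^2 + (a^5*‖B‖^3 + 2*(a^6*‖B‖^4))) := by gcongr
      _ ≤ 5*(a^6*‖B‖) := by
          linarith [mono 0 6 1 1 (by norm_num) (by norm_num), mono 4 6 2 1 (by norm_num) (by norm_num), mono 5 6 3 1 (by norm_num) (by norm_num), mono 6 6 4 1 (by norm_num) (by norm_num)]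
  have hun : ‖u‖ ≤ 5*(a^7*‖B‖) := by
    rw [hudef]
    calc ‖P (F₁ B)‖ ≤ ‖P‖ * ‖F₁ B‖ := P.le_opNorm _
      _ ≤ a * (5*(a^6*‖B‖)) := by gcongr
      _ = 5*(a^7*‖B‖) := by ring
  have hdiff : F₁ B - B = g2 + (g3 + ee) := by rw [hF1eq]; abel
  have hdn : ‖u - P B‖ ≤ 4*(a^7*‖B‖^2) := by
    have heq : u - P B = P (F₁ B - B) := by rw [hudef]; exact (map_sub P _ _).symm
    rw [heq, hdiff]
    calc ‖P (g2 + (g3 + ee))‖ ≤ ‖P‖ * ‖g2 + (g3 + ee)‖ := P.le_opNorm _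
      _ ≤ ‖P‖ * (‖g2‖ + (‖g3‖ + ‖ee‖)) := by
          gcongr
          refine le_trans (norm_add_le _ _) ?_
          gcongr
          exact norm_add_le _ _
      _ ≤ a * (a^4*‖B‖^2 + (a^5*‖B‖^3 + 2*(a^6*‖B‖^4))) := by gcongr
      _ ≤ 4*(a^7*‖B‖^2) := by
          nlinarith [mono 5 7 2 2 (by norm_num) (by norm_num), mono 6 7 3 2 (by norm_num) (by norm_num), mono 7 7 4 2 (by norm_num) (by norm_num), ha0,
            mul_le_mul_of_nonneg_left (mono 4 6 2 2 (by norm_num) (by norm_num)) ha0,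
            mul_le_mul_of_nonneg_left (mono 5 6 3 2 (by norm_num) (by norm_num)) ha0,
            mul_le_mul_of_nonneg_left (mono 6 6 4 2 (by norm_num) (by norm_num)) ha0]
  have hg2'n : ‖g2'‖ ≤ 25*(a^16*‖B‖^2) := by
    rw [hg2'def]
    calc ‖Mop ((u^2).comp N)‖ ≤ ‖Mop‖ * ‖(u^2).comp N‖ := Mop.le_opNorm _
      _ ≤ ‖Mop‖ * (‖u^2‖ * ‖N‖) := by
          gcongr
          exact ContinuousLinearMap.opNorm_comp_le _ _
      _ ≤ ‖Mop‖ * (‖u‖^2 * ‖N‖) := by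
          gcongr
          exact norm_pow_le' _ (by omega)
      _ ≤ a * ((5*(a^7*‖B‖))^2 * a) := by gcongr
      _ = 25*(a^16*‖B‖^2) := by ring
  have hgn : ‖g‖ ≤ 25*(a^17*‖B‖^2) := by
    rw [hgdef]
    calc ‖P g2'‖ ≤ ‖P‖ * ‖g2'‖ := P.le_opNorm _
      _ ≤ a * (25*(a^16*‖B‖^2)) := by gcongr
      _ = 25*(a^17*‖B‖^2) := by ring
  -- difference of squares
  have hdelta_eq : g2' - g2 = Mop ((u^2 - (P B)^2).comp N) := by
    rw [ContinuousLinearMap.sub_comp, map_sub, ← hg2'def, ← hg2def]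
  have hsq : ‖u^2 - (P B)^2‖ ≤ 24*(a^14*‖B‖^3) := by
    have hid : u^2 - (P B)^2 = u*(u - P B) + (u - P B)*(P B) := by noncomm_ring
    rw [hid]
    calc ‖u*(u - P B) + (u - P B)*(P B)‖
        ≤ ‖u‖*‖u - P B‖ + ‖u - P B‖*‖P B‖ :=
          le_trans (norm_add_le _ _) (add_le_add (norm_mul_le _ _) (norm_mul_le _ _))
      _ ≤ (5*(a^7*‖B‖))*(4*(a^7*‖B‖^2)) + (4*(a^7*‖B‖^2))*(a*‖B‖) := by gcongr
      _ = 20*(a^14*‖B‖^3) + 4*(a^8*‖B‖^3) := by ring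
      _ ≤ 24*(a^14*‖B‖^3) := by linarith [mono 8 14 3 3 (by norm_num) (by norm_num)]
  have hdelta_n : ‖g2' - g2‖ ≤ 24*(a^16*‖B‖^3) := by
    rw [hdelta_eq]
    calc ‖Mop ((u^2 - (P B)^2).comp N)‖ ≤ ‖Mop‖ * ‖(u^2 - (P B)^2).comp N‖ :=
          Mop.le_opNorm _
      _ ≤ ‖Mop‖ * (‖u^2 - (P B)^2‖ * ‖N‖) := by
          gcongr
          exact ContinuousLinearMap.opNorm_comp_le _ _
      _ ≤ a * ((24*(a^14*‖B‖^3)) * a) := by gcongr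
      _ = 24*(a^16*‖B‖^3) := by ring
  -- d - g estimate
  have hdg_eq : (u - P B) - g = P (g3 + ee) - P (g2' - g2) := by
    have h1' : u - P B = P (F₁ B - B) := by rw [hudef]; exact (map_sub P _ _).symm
    have h2' : P (F₁ B - B) = P g2 + P (g3 + ee) := by rw [hdiff, map_add]
    have h3' : g = P g2 + P (g2' - g2) := by
      rw [hgdef, ← map_add]
      congr 1
      abel
    rw [h1', h2', h3']
    abel
  have hdgn : ‖(u - P B) - g‖ ≤ 27*(a^17*‖B‖^3) := by
    rw [hdg_eq]
    calc ‖P (g3 + ee) - P (g2' - g2)‖ ≤ ‖P (g3 + ee)‖ + ‖P (g2' - g2)‖ :=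
          norm_sub_le _ _
      _ ≤ ‖P‖*‖g3 + ee‖ + ‖P‖*‖g2' - g2‖ :=
          add_le_add (P.le_opNorm _) (P.le_opNorm _)
      _ ≤ ‖P‖*(‖g3‖ + ‖ee‖) + ‖P‖*‖g2' - g2‖ := by
          gcongr
          exact norm_add_le _ _
      _ ≤ a*(a^5*‖B‖^3 + 2*(a^6*‖B‖^4)) + a*(24*(a^16*‖B‖^3)) := by gcongr
      _ ≤ 27*(a^17*‖B‖^3) := by
          nlinarith [mono 6 17 3 3 (by norm_num) (by norm_num), mono 7 17 4 3 (by norm_num) (by norm_num), ha0,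
            mul_le_mul_of_nonneg_left (mono 5 16 3 3 (by norm_num) (by norm_num)) ha0,
            mul_le_mul_of_nonneg_left (mono 6 16 4 3 (by norm_num) (by norm_num)) ha0]
  -- cube difference
  have hcube : ‖u^3 - (P B)^3‖ ≤ 300*(a^21*‖B‖^4) := by
    have hid : u^3 - (P B)^3
        = u^2*(u - P B) + u*((u - P B)*(P B)) + (u - P B)*((P B)*(P B)) := by
      noncomm_ring
    have hu2 : ‖u^2‖ ≤ ‖u‖^2 := norm_pow_le' _ (by omega)
    rw [hid]
    calc ‖u^2*(u - P B) + u*((u - P B)*(P B)) + (u - P B)*((P B)*(P B))‖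
        ≤ ‖u^2*(u - P B) + u*((u - P B)*(P B))‖ + ‖(u - P B)*((P B)*(P B))‖ :=
          norm_add_le _ _
      _ ≤ (‖u^2‖*‖u - P B‖ + ‖u‖*(‖u - P B‖*‖P B‖)) + ‖u - P B‖*(‖P B‖*‖P B‖) := by
          refine add_le_add (le_trans (norm_add_le _ _) (add_le_add (norm_mul_le _ _) ?_)) ?_
          · exact le_trans (norm_mul_le _ _) (by gcongr; exact norm_mul_le _ _)
          · exact le_trans (norm_mul_le _ _) (by gcongr; exact norm_mul_le _ _)
      _ ≤ (‖u‖^2*‖u - P B‖ + ‖u‖*(‖u - P B‖*‖P B‖)) + ‖u - P B‖*(‖P B‖*‖P B‖) := by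
          gcongr
      _ ≤ ((5*(a^7*‖B‖))^2*(4*(a^7*‖B‖^2)) + (5*(a^7*‖B‖))*((4*(a^7*‖B‖^2))*(a*‖B‖)))
          + (4*(a^7*‖B‖^2))*((a*‖B‖)*(a*‖B‖)) := by gcongr
      _ = 100*(a^21*‖B‖^4) + 20*(a^15*‖B‖^4) + 4*(a^9*‖B‖^4) := by ring
      _ ≤ 300*(a^21*‖B‖^4) := by
          linarith [mono 15 21 4 4 (by norm_num) (by norm_num), mono 9 21 4 4 (by norm_num) (by norm_num),
            mul_nonneg (pow_nonneg ha0 21) (pow_nonneg hq0 4)]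
  -- the W' part
  have hW'n : ‖(u^2 - (P B)^2) - (u*g + g*u)‖ ≤ 262*(a^24*‖B‖^4) := by
    have hid : (u^2 - (P B)^2) - (u*g + g*u)
        = u*((u - P B) - g) + ((u - P B) - g)*(P B) - g*(u - P B) := by noncomm_ring
    rw [hid]
    calc ‖u*((u - P B) - g) + ((u - P B) - g)*(P B) - g*(u - P B)‖
        ≤ ‖u*((u - P B) - g) + ((u - P B) - g)*(P B)‖ + ‖g*(u - P B)‖ :=
          norm_sub_le _ _
      _ ≤ (‖u‖*‖(u - P B) - g‖ + ‖(u - P B) - g‖*‖P B‖) + ‖g‖*‖u - P B‖ :=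
          add_le_add (le_trans (norm_add_le _ _)
            (add_le_add (norm_mul_le _ _) (norm_mul_le _ _))) (norm_mul_le _ _)
      _ ≤ ((5*(a^7*‖B‖))*(27*(a^17*‖B‖^3)) + (27*(a^17*‖B‖^3))*(a*‖B‖))
          + (25*(a^17*‖B‖^2))*(4*(a^7*‖B‖^2)) := by gcongr
      _ = 135*(a^24*‖B‖^4) + 27*(a^18*‖B‖^4) + 100*(a^24*‖B‖^4) := by ring
      _ ≤ 262*(a^24*‖B‖^4) := by linarith [mono 18 24 4 4 (by norm_num) (by norm_num)]
  -- the key identity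
  have hkey : B - (F₁ B + F₂ B + F₃ B)
      = Mop (((((u^2 - (P B)^2) - (u*g + g*u)) + (u^3 - (P B)^3)).comp N)) - ee := by
    have hexp : Mop (((((u^2 - (P B)^2) - (u*g + g*u)) + (u^3 - (P B)^3)).comp N))
        = ((g2' - g2) - (Mop ((u.comp g).comp N) + Mop ((g.comp u).comp N)))
          + (Mop ((u^3).comp N) - g3) := by
      simp only [ContinuousLinearMap.add_comp, ContinuousLinearMap.sub_comp,
        ContinuousLinearMap.mul_def, map_add, map_sub]
      rw [← hg2'def, ← hg2def, ← hg3def]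
    rw [hexp, hF1eq, h2, h3]
    abel
  -- conclusion
  have hRn : ‖B - (F₁ B + F₂ B + F₃ B)‖ ≤ 564*(a^26*‖B‖^4) := by
    rw [hkey]
    calc ‖Mop (((((u^2 - (P B)^2) - (u*g + g*u)) + (u^3 - (P B)^3)).comp N)) - ee‖
        ≤ ‖Mop (((((u^2 - (P B)^2) - (u*g + g*u)) + (u^3 - (P B)^3)).comp N))‖ + ‖ee‖ :=
          norm_sub_le _ _
      _ ≤ ‖Mop‖ * ‖((((u^2 - (P B)^2) - (u*g + g*u)) + (u^3 - (P B)^3)).comp N)‖ + ‖ee‖ := by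
          gcongr
          exact Mop.le_opNorm _
      _ ≤ ‖Mop‖ * (‖((u^2 - (P B)^2) - (u*g + g*u)) + (u^3 - (P B)^3)‖ * ‖N‖) + ‖ee‖ := by
          gcongr
          exact ContinuousLinearMap.opNorm_comp_le _ _
      _ ≤ ‖Mop‖ * ((‖(u^2 - (P B)^2) - (u*g + g*u)‖ + ‖u^3 - (P B)^3‖) * ‖N‖) + ‖ee‖ := by
          gcongr
          exact norm_add_le _ _
      _ ≤ a * ((262*(a^24*‖B‖^4) + 300*(a^21*‖B‖^4)) * a) + 2*(a^6*‖B‖^4) := by gcongr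
      _ ≤ 564*(a^26*‖B‖^4) := by
          nlinarith [mono 6 26 4 4 (by norm_num) (by norm_num), ha0, mul_nonneg ha0 ha0,
            mul_le_mul_of_nonneg_left (mul_le_mul_of_nonneg_left (mono 21 24 4 4 (by norm_num) (by norm_num)) ha0) ha0,
            mul_le_mul_of_nonneg_right (mul_le_mul_of_nonneg_left (mono 24 24 4 4 (by norm_num) (by norm_num)) ha0) ha0]
  have hF2n : ‖F₂ B‖ ≤ 25*(a^16*‖B‖^2) := by
    rw [h2, norm_neg]
    exact hg2'n
  have hF3n : ‖F₃ B‖ ≤ 375*(a^26*‖B‖^3) := by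
    have hX : ‖Mop ((u.comp g).comp N)‖ ≤ 125*(a^26*‖B‖^3) := by
      calc ‖Mop ((u.comp g).comp N)‖ ≤ ‖Mop‖ * ‖(u.comp g).comp N‖ := Mop.le_opNorm _
        _ ≤ ‖Mop‖ * (‖u.comp g‖ * ‖N‖) := by
            gcongr
            exact ContinuousLinearMap.opNorm_comp_le _ _
        _ ≤ ‖Mop‖ * ((‖u‖ * ‖g‖) * ‖N‖) := by
            gcongr
            exact ContinuousLinearMap.opNorm_comp_le _ _
        _ ≤ a * (((5*(a^7*‖B‖)) * (25*(a^17*‖B‖^2))) * a) := by gcongr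
        _ = 125*(a^26*‖B‖^3) := by ring
    have hY : ‖Mop ((g.comp u).comp N)‖ ≤ 125*(a^26*‖B‖^3) := by
      calc ‖Mop ((g.comp u).comp N)‖ ≤ ‖Mop‖ * ‖(g.comp u).comp N‖ := Mop.le_opNorm _
        _ ≤ ‖Mop‖ * (‖g.comp u‖ * ‖N‖) := by
            gcongr
            exact ContinuousLinearMap.opNorm_comp_le _ _
        _ ≤ ‖Mop‖ * ((‖g‖ * ‖u‖) * ‖N‖) := by
            gcongr
            exact ContinuousLinearMap.opNorm_comp_le _ _
        _ ≤ a * (((25*(a^17*‖B‖^2)) * (5*(a^7*‖B‖))) * a) := by gcongr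
        _ = 125*(a^26*‖B‖^3) := by ring
    have hZ : ‖Mop ((u^3).comp N)‖ ≤ 125*(a^26*‖B‖^3) := by
      calc ‖Mop ((u^3).comp N)‖ ≤ ‖Mop‖ * ‖(u^3).comp N‖ := Mop.le_opNorm _
        _ ≤ ‖Mop‖ * (‖u^3‖ * ‖N‖) := by
            gcongr
            exact ContinuousLinearMap.opNorm_comp_le _ _
        _ ≤ ‖Mop‖ * (‖u‖^3 * ‖N‖) := by
            gcongr
            exact norm_pow_le' _ (by omega)
        _ ≤ a * ((5*(a^7*‖B‖))^3 * a) := by gcongr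
        _ = 125*(a^23*‖B‖^3) := by ring
        _ ≤ 125*(a^26*‖B‖^3) := by linarith [mono 23 26 3 3 (by norm_num) (by norm_num)]
    calc ‖F₃ B‖ = ‖-Mop ((u^3).comp N) + Mop ((u.comp g).comp N) + Mop ((g.comp u).comp N)‖ := by
          rw [h3]
      _ ≤ ‖-Mop ((u^3).comp N) + Mop ((u.comp g).comp N)‖ + ‖Mop ((g.comp u).comp N)‖ :=
          norm_add_le _ _
      _ ≤ (‖Mop ((u^3).comp N)‖ + ‖Mop ((u.comp g).comp N)‖) + ‖Mop ((g.comp u).comp N)‖ := by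
          gcongr
          exact le_trans (norm_add_le _ _) (by rw [norm_neg])
      _ ≤ (125*(a^26*‖B‖^3) + 125*(a^26*‖B‖^3)) + 125*(a^26*‖B‖^3) := by gcongr
      _ = 375*(a^26*‖B‖^3) := by ring
  have hapow : a^6 ≤ a^26 := pow_le_pow_right₀ ha1 (by omega)
  have hapow2 : a^16 ≤ a^26 := pow_le_pow_right₀ ha1 (by omega)
  have haq4 : (0:ℝ) ≤ a^26 := pow_nonneg ha0 26
  refine ⟨?_, ?_, ?_, ?_⟩
  · calc ‖F₁ B‖ ≤ 5*(a^6*‖B‖) := hF1n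
      _ ≤ 1300*a^26*‖B‖ := by linarith [mono 6 26 1 1 (by norm_num) (by norm_num), mul_nonneg haq4 hq0]
  · calc ‖F₂ B‖ ≤ 25*(a^16*‖B‖^2) := hF2n
      _ ≤ 1300*a^26*‖B‖^2 := by
          linarith [mono 16 26 2 2 (by norm_num) (by norm_num), mul_nonneg haq4 (pow_nonneg hq0 2)]
  · calc ‖F₃ B‖ ≤ 375*(a^26*‖B‖^3) := hF3n
      _ ≤ 1300*a^26*‖B‖^3 := by linarith [mul_nonneg haq4 (pow_nonneg hq0 3)]
  · calc ‖B - (F₁ B + F₂ B + F₃ B)‖ ≤ 564*(a^26*‖B‖^4) := hRn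
      _ ≤ 1300*a^26*‖B‖^4 := by linarith [mul_nonneg haq4 (pow_nonneg hq0 4)]

end
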